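/- Let H be a complex Hilbert space (a complete complex inner product space), let v₀ ∈ H be a unit vector, and let V and W be complete subspaces of H with v₀ ∈ V and v₀ ∈ W. Assume that every vector u ∈ V orthogonal to v₀ is orthogonal to every vector w ∈ W orthogonal to v₀ (i.e., for all u ∈ V and w ∈ W, ⟨u, v₀⟩ = 0 and ⟨w, v₀⟩ = 0 imply ⟨u, w⟩ = 0). Let P_V and P_W denote the orthogonal projections of H onto V and W, and P₀ the orthogonal projection onto the one-dimensional span of v₀. Then P_V ∘ P_W = P_W ∘ P_V = P₀. -/

import Mathlib

open Submodule

private lemma key5 {H : Type*} [NormedAddCommGroup H] [InnerProductSpace ℂ H] [CompleteSpace H]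
    (v₀ : H) (hv₀ : ‖v₀‖ = 1) (V W : Submodule ℂ H) [CompleteSpace V] [CompleteSpace W]
    (hVmem : v₀ ∈ V) (hWmem : v₀ ∈ W)
    (horth : ∀ u ∈ V, ∀ w ∈ W, inner ℂ u v₀ = (0 : ℂ) → inner ℂ w v₀ = (0 : ℂ) →
      inner ℂ u w = (0 : ℂ)) (x : H) :
    ((orthogonalProjection V ((orthogonalProjection W x : H)) : H)) =
      (inner ℂ v₀ x : ℂ) • v₀ := by
  set y : H := (orthogonalProjection W x : H) with hy
  have hinner_v₀_v₀ : (inner ℂ v₀ v₀ : ℂ) = 1 := by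
    rw [inner_self_eq_norm_sq_to_K, hv₀]; norm_num
  have hvy : (inner ℂ v₀ y : ℂ) = inner ℂ v₀ x := by
    have h : x - y ∈ Wᗮ := sub_starProjection_mem_orthogonal (K := W) x
    have := h v₀ hWmem
    rw [inner_sub_right] at this
    linear_combination -this
  set w' : H := y - (inner ℂ v₀ x : ℂ) • v₀ with hw'
  have hw'W : w' ∈ W := by
    exact Submodule.sub_mem W (by simp [hy, SetLike.coe_mem]) (Submodule.smul_mem W _ hWmem)
  have hw'v₀ : (inner ℂ w' v₀ : ℂ) = 0 := by
    have : (inner ℂ v₀ w' : ℂ) = 0 := by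
      rw [hw', inner_sub_right, inner_smul_right, hinner_v₀_v₀, hvy]; ring
    rw [← inner_conj_symm, this, map_zero]
  set u : H := (orthogonalProjection V w' : H) with hu
  have huV : u ∈ V := SetLike.coe_mem _
  have huv₀ : (inner ℂ u v₀ : ℂ) = 0 := by
    have hv₀proj : (orthogonalProjection V v₀ : H) = v₀ :=
      starProjection_eq_self_iff.mpr hVmem
    have : inner ℂ (orthogonalProjection V w' : H) v₀ = inner ℂ w' (orthogonalProjection V v₀ : H) :=
      inner_starProjection_left_eq_right (K := V) w' v₀
    rw [hv₀proj] at this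
    rw [hu, this, hw'v₀]
  have huw' : (inner ℂ u w' : ℂ) = 0 := horth u huV w' hw'W huv₀ hw'v₀
  have huu : (inner ℂ u u : ℂ) = 0 := by
    have hmem : w' - u ∈ Vᗮ := sub_starProjection_mem_orthogonal (K := V) w'
    have h2 := (Submodule.mem_orthogonal' Vᗮ u).mp (Submodule.le_orthogonal_orthogonal V huV)
      _ hmem
    rw [inner_sub_right] at h2
    linear_combination huw' - h2
  have hu0 : u = 0 := inner_self_eq_zero.mp huu
  have hy_eq : y = (inner ℂ v₀ x : ℂ) • v₀ + w' := by rw [hw']; abel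
  rw [hy_eq, map_add, map_smul]
  have hv₀proj : (orthogonalProjection V v₀ : H) = v₀ :=
    starProjection_eq_self_iff.mpr hVmem
  push_cast
  rw [hv₀proj, ← hu, hu0, add_zero]

/-- If `V`, `W` are complete subspaces of a Hilbert space, both containing the unit vector
`v₀`, such that the orthogonal complements of `v₀` inside `V` and inside `W` are mutually
orthogonal, then the orthogonal projections onto `V` and `W` commute and their product is
the orthogonal projection onto the span of `v₀`. -/
theorem stmt5 {H : Type*} [NormedAddCommGroup H] [InnerProductSpace ℂ H] [CompleteSpace H]
    (v₀ : H) (hv₀ : ‖v₀‖ = 1) (V W : Submodule ℂ H) [CompleteSpace V] [CompleteSpace W]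
    (hVmem : v₀ ∈ V) (hWmem : v₀ ∈ W)
    (horth : ∀ u ∈ V, ∀ w ∈ W, inner ℂ u v₀ = (0 : ℂ) → inner ℂ w v₀ = (0 : ℂ) →
      inner ℂ u w = (0 : ℂ)) :
    (V.subtypeL.comp (orthogonalProjection V)).comp
        (W.subtypeL.comp (orthogonalProjection W)) =
      (ℂ ∙ v₀).subtypeL.comp (orthogonalProjection (ℂ ∙ v₀)) ∧
    (W.subtypeL.comp (orthogonalProjection W)).comp
        (V.subtypeL.comp (orthogonalProjection V)) =
      (ℂ ∙ v₀).subtypeL.comp (orthogonalProjection (ℂ ∙ v₀)) := by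
  have horth' : ∀ u ∈ W, ∀ w ∈ V, inner ℂ u v₀ = (0 : ℂ) → inner ℂ w v₀ = (0 : ℂ) →
      inner ℂ u w = (0 : ℂ) := by
    intro u hu w hw h1 h2
    have := horth w hw u hu h2 h1
    rw [← inner_conj_symm, this, map_zero]
  constructor <;> apply ContinuousLinearMap.ext <;> intro x <;>
    simp only [ContinuousLinearMap.comp_apply, Submodule.subtypeL_apply] <;>
    rw [show ((orthogonalProjection (ℂ ∙ v₀) x : H)) = inner ℂ v₀ x • v₀ from
      Submodule.starProjection_unit_singleton ℂ hv₀ x]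
  · rw [key5 v₀ hv₀ V W hVmem hWmem horth x]
  · rw [key5 v₀ hv₀ W V hWmem hVmem horth' x]
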